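/- Consider the high-pass filter mechanism: given w ∈ ℝ_{≥0}^E, set ŵ_e = w_e + Z_e with Z_e i.i.d. Lap(1/ε), then zero out every coordinate with ŵ_e ≤ t where t = 2log(2n/δ)/ε. Then with probability at least 1 − δ, ‖w − ŵ‖₁ ≤ 2|E|·t = 4|E|·log(2n/δ)/ε, and consequently max_{q∈[0,1]^N} |q^⊤w − q^⊤ŵ| ≤ 4|E|·log(2n/δ)/ε. -/

import Mathlib

open MeasureTheory Finset

/-- The Laplace distribution with scale `b`, given by density exp(−|x|/b)/(2b). -/
noncomputable def laplaceMeasure (b : ℝ) : Measure ℝ :=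
  volume.withDensity fun x => ENNReal.ofReal (Real.exp (-|x| / b) / (2 * b))

/-- The high-pass filter mechanism: add Laplace noise ω_e on each edge e ∈ E (the support
    of w), then zero out every coordinate whose perturbed weight is at most the threshold t;
    coordinates outside the support remain 0. -/
noncomputable def highPass (N : ℕ) (w : Fin N → ℝ) (t : ℝ) (ω : Fin N → ℝ) :
    Fin N → ℝ :=
  fun e => if w e ≠ 0 then (if w e + ω e ≤ t then 0 else w e + ω e) else 0

lemma lapInt (b t : ℝ) (hb : 0 < b) :
    ∫ x in Set.Ioi t, Real.exp (-x / b) = b * Real.exp (-t / b) := by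
  have hderiv : ∀ x ∈ Set.Ici t,
      HasDerivAt (fun x => -b * Real.exp (-x / b)) (Real.exp (-x / b)) x := by
    intro x _
    have h1 : HasDerivAt (fun x : ℝ => -x / b) (-1 / b) x := by
      simpa using ((hasDerivAt_id x).neg.div_const b)
    have h2 := (h1.exp).const_mul (-b)
    refine h2.congr_deriv ?_
    rw [show -b * (Real.exp (-x / b) * (-1 / b)) = Real.exp (-x / b) * (b / b) by ring, div_self hb.ne', mul_one]
  have hint : IntegrableOn (fun x => Real.exp (-x / b)) (Set.Ioi t) := by
    have := exp_neg_integrableOn_Ioi t (show (0:ℝ) < b⁻¹ by positivity)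
    refine this.congr_fun (fun x _ => ?_) measurableSet_Ioi
    dsimp only; rw [neg_mul, inv_mul_eq_div, neg_div]
  have htend : Filter.Tendsto (fun x => -b * Real.exp (-x / b)) Filter.atTop (nhds 0) := by
    have h1 : Filter.Tendsto (fun x : ℝ => -x / b) Filter.atTop Filter.atBot := by
      apply Filter.Tendsto.atBot_div_const hb
      exact Filter.tendsto_neg_atTop_atBot.comp Filter.tendsto_id
    have := (Real.tendsto_exp_atBot.comp h1).const_mul (-b)
    simpa using this
  have := integral_Ioi_of_hasDerivAt_of_tendsto' hderiv hint htend
  rw [this]; ring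

lemma lapIntegrable (b t : ℝ) (hb : 0 < b) :
    IntegrableOn (fun x => Real.exp (-x / b) / (2 * b)) (Set.Ioi t) := by
  have hint : IntegrableOn (fun x => Real.exp (-x / b)) (Set.Ioi t) := by
    have := exp_neg_integrableOn_Ioi t (show (0:ℝ) < b⁻¹ by positivity)
    refine this.congr_fun (fun x _ => ?_) measurableSet_Ioi
    dsimp only; rw [neg_mul, inv_mul_eq_div, neg_div]
  exact hint.div_const _

lemma lapCore (b t : ℝ) (hb : 0 < b) (ht : 0 ≤ t) :
    ∫⁻ x in Set.Ioi t, ENNReal.ofReal (Real.exp (-|x| / b) / (2 * b))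
      = ENNReal.ofReal (Real.exp (-t / b) / 2) := by
  rw [setLIntegral_congr_fun measurableSet_Ioi
    ((fun x (hx : x ∈ Set.Ioi t) => by
      rw [abs_of_pos (lt_of_le_of_lt ht hx)]))]
  rw [← ofReal_integral_eq_lintegral_ofReal (lapIntegrable b t hb)
    (Filter.Eventually.of_forall (fun x => by positivity))]
  rw [integral_div, lapInt b t hb]
  congr 1
  field_simp

lemma lapCoreNeg (b t : ℝ) (hb : 0 < b) (ht : 0 ≤ t) :
    ∫⁻ x in Set.Iio (-t), ENNReal.ofReal (Real.exp (-|x| / b) / (2 * b))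
      = ENNReal.ofReal (Real.exp (-t / b) / 2) := by
  have h := setLIntegral_map (μ := (volume : Measure ℝ))
    (f := fun x => ENNReal.ofReal (Real.exp (-|x| / b) / (2 * b)))
    (g := fun x : ℝ => -x) (s := Set.Iio (-t))
    measurableSet_Iio (by measurability) measurable_neg
  rw [Measure.map_neg_eq_self (volume : Measure ℝ)] at h
  rw [h]
  have hpre : (fun x : ℝ => -x) ⁻¹' Set.Iio (-t) = Set.Ioi t := by
    ext x; simp [Set.mem_Iio, Set.mem_Ioi, neg_lt_neg_iff]
  rw [hpre]
  simp_rw [abs_neg]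
  exact lapCore b t hb ht

lemma lapMass (b : ℝ) (hb : 0 < b) : laplaceMeasure b Set.univ = 1 := by
  rw [laplaceMeasure, withDensity_apply _ MeasurableSet.univ, Measure.restrict_univ,
    ← lintegral_add_compl _ (measurableSet_Iio (a := (0:ℝ)))]
  have h1 : (Set.Iio (0:ℝ))ᶜ = Set.Ici 0 := Set.compl_Iio
  rw [h1]
  have h2 : ∫⁻ x in Set.Ici (0:ℝ), ENNReal.ofReal (Real.exp (-|x| / b) / (2 * b))
      = ∫⁻ x in Set.Ioi (0:ℝ), ENNReal.ofReal (Real.exp (-|x| / b) / (2 * b)) :=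
    (setLIntegral_congr MeasureTheory.Ioi_ae_eq_Ici).symm
  rw [h2, lapCore b 0 hb le_rfl]
  have h3 : ∫⁻ x in Set.Iio (-(0:ℝ)), ENNReal.ofReal (Real.exp (-|x| / b) / (2 * b))
      = ENNReal.ofReal (Real.exp (-(0:ℝ) / b) / 2) := lapCoreNeg b 0 hb le_rfl
  rw [neg_zero] at h3
  rw [h3, ← ENNReal.ofReal_add (by positivity) (by positivity)]
  norm_num

lemma lapTail (b t : ℝ) (hb : 0 < b) (ht : 0 ≤ t) :
    laplaceMeasure b {x : ℝ | t < |x|} ≤ ENNReal.ofReal (Real.exp (-t / b)) := by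
  have hset : {x : ℝ | t < |x|} = Set.Iio (-t) ∪ Set.Ioi t := by
    ext x
    simp only [Set.mem_setOf_eq, Set.mem_union, Set.mem_Iio, Set.mem_Ioi, lt_abs, lt_neg]
    tauto
  rw [hset]
  refine (measure_union_le _ _).trans ?_
  rw [laplaceMeasure, withDensity_apply _ measurableSet_Iio,
    withDensity_apply _ measurableSet_Ioi, lapCore b t hb ht, lapCoreNeg b t hb ht,
    ← ENNReal.ofReal_add (by positivity) (by positivity)]
  apply le_of_eq; congr 1; ring

lemma lapPiEval (N : ℕ) (b t : ℝ) (hb : 0 < b) (e : Fin N) :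
    Measure.pi (fun _ : Fin N => laplaceMeasure b) {ω : Fin N → ℝ | t < |ω e|}
      = laplaceMeasure b {x : ℝ | t < |x|} := by
  haveI : IsProbabilityMeasure (laplaceMeasure b) := ⟨lapMass b hb⟩
  have hset : {ω : Fin N → ℝ | t < |ω e|}
      = Set.pi Set.univ (fun i => if i = e then {x : ℝ | t < |x|} else Set.univ) := by
    ext ω
    simp only [Set.mem_setOf_eq, Set.mem_pi, Set.mem_univ, true_implies]
    constructor
    · intro h i
      by_cases hi : i = e
      · subst hi; simp [h]
      · simp [hi]
    · intro h
      have := h e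
      simpa using this
  rw [hset, Measure.pi_pi]
  have : ∀ i : Fin N, laplaceMeasure b (if i = e then {x : ℝ | t < |x|} else Set.univ)
      = if i = e then laplaceMeasure b {x : ℝ | t < |x|} else 1 := by
    intro i; split <;> simp [measure_univ]
  simp_rw [this]
  rw [Finset.prod_ite_eq' Finset.univ e (fun _ => laplaceMeasure b {x : ℝ | t < |x|})]
  simp

theorem stmt19 (n N : ℕ) (hN : N = n.choose 2) (ε δ : ℝ) (hε : 0 < ε)
    (hδ : δ ∈ Set.Ioo (0:ℝ) 1) (w : Fin N → ℝ) (hw : ∀ e, 0 ≤ w e) :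
    (Measure.pi fun _ : Fin N => laplaceMeasure (1 / ε))
      {ω | ¬ ((∑ e, |w e - highPass N w (2 * Real.log (2 * n / δ) / ε) ω e|
            ≤ 4 * ((Finset.univ.filter fun e => w e ≠ 0).card : ℝ) *
                Real.log (2 * n / δ) / ε) ∧
          ∀ q : Fin N → ℝ, (∀ i, q i ∈ Set.Icc (0:ℝ) 1) →
            |∑ e, q e * (w e - highPass N w (2 * Real.log (2 * n / δ) / ε) ω e)|
              ≤ 4 * ((Finset.univ.filter fun e => w e ≠ 0).card : ℝ) *
                  Real.log (2 * n / δ) / ε)}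
      ≤ ENNReal.ofReal δ := by
  obtain ⟨hδ0, hδ1⟩ := hδ
  rcases Nat.eq_zero_or_pos n with hn0 | hn
  · -- n = 0 : N = 0 and everything is trivially true
    subst hN
    subst hn0
    have hempty : {ω : Fin (Nat.choose 0 2) → ℝ |
        ¬ ((∑ e, |w e - highPass (Nat.choose 0 2) w (2 * Real.log (2 * (0:ℕ) / δ) / ε) ω e|
            ≤ 4 * ((Finset.univ.filter fun e => w e ≠ 0).card : ℝ) *
                Real.log (2 * (0:ℕ) / δ) / ε) ∧
          ∀ q : Fin (Nat.choose 0 2) → ℝ, (∀ i, q i ∈ Set.Icc (0:ℝ) 1) →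
            |∑ e, q e * (w e - highPass (Nat.choose 0 2) w (2 * Real.log (2 * (0:ℕ) / δ) / ε) ω e)|
              ≤ 4 * ((Finset.univ.filter fun e => w e ≠ 0).card : ℝ) *
                  Real.log (2 * (0:ℕ) / δ) / ε)} = ∅ := by
      ext ω
      haveI : IsEmpty (Fin (Nat.choose 0 2)) := ⟨fun e => absurd e.2 (by simp)⟩
      simp only [Set.mem_setOf_eq, Set.mem_empty_iff_false, iff_false, not_not]
      refine ⟨?_, fun q _ => ?_⟩ <;> simp only [Finset.univ_eq_empty, Finset.sum_empty,
        Finset.filter_empty, Finset.card_empty, Nat.cast_zero, mul_zero, zero_mul, zero_div,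
        abs_zero, le_refl]
    rw [hempty]
    rw [measure_empty]; exact bot_le
  · -- main case n ≥ 1
    set L := Real.log (2 * n / δ) with hLdef
    set t := 2 * L / ε with htdef
    have hn1 : (1:ℝ) ≤ (n:ℝ) := by exact_mod_cast hn
    have hpos : (0:ℝ) < 2 * n / δ := by positivity
    have hL : 0 < L := by
      apply Real.log_pos
      rw [lt_div_iff₀ hδ0]
      linarith
    have ht : 0 < t := by positivity
    set E := Finset.univ.filter fun e : Fin N => w e ≠ 0 with hEdef
    -- pointwise good event implies the conjunction
    have key : ∀ ω : Fin N → ℝ, (∀ e ∈ E, |ω e| ≤ t) →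
        ((∑ e, |w e - highPass N w t ω e| ≤ 4 * (E.card : ℝ) * L / ε) ∧
          ∀ q : Fin N → ℝ, (∀ i, q i ∈ Set.Icc (0:ℝ) 1) →
            |∑ e, q e * (w e - highPass N w t ω e)| ≤ 4 * (E.card : ℝ) * L / ε) := by
      intro ω hω
      have perE : ∀ e ∈ E, |w e - highPass N w t ω e| ≤ 2 * t := by
        intro e he
        have hne : w e ≠ 0 := (Finset.mem_filter.mp he).2
        have hab := abs_le.mp (hω e he)
        by_cases hc : w e + ω e ≤ t
        · have : highPass N w t ω e = 0 := by simp [highPass, hne, hc]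
          rw [this, sub_zero, abs_of_nonneg (hw e)]
          linarith
        · have : highPass N w t ω e = w e + ω e := by simp [highPass, hne, hc]
          rw [this]
          have : w e - (w e + ω e) = -ω e := by ring
          rw [this, abs_neg]
          have := hω e he
          linarith
      have per0 : ∀ e, e ∉ E → w e - highPass N w t ω e = 0 := by
        intro e he
        have hz : w e = 0 := by
          by_contra h
          exact he (Finset.mem_filter.mpr ⟨Finset.mem_univ e, h⟩)
        simp [highPass, hz]
      have hsum : ∑ e, |w e - highPass N w t ω e| ≤ 4 * (E.card : ℝ) * L / ε := by
        have h1 : ∑ e, |w e - highPass N w t ω e| = ∑ e ∈ E, |w e - highPass N w t ω e| := by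
          refine (Finset.sum_subset (Finset.subset_univ E) ?_).symm
          intro e _ he
          rw [per0 e he, abs_zero]
        rw [h1]
        calc ∑ e ∈ E, |w e - highPass N w t ω e| ≤ E.card • (2 * t) :=
              Finset.sum_le_card_nsmul E _ (2 * t) perE
          _ = (E.card : ℝ) * (2 * t) := by rw [nsmul_eq_mul]
          _ = 4 * (E.card : ℝ) * L / ε := by rw [htdef]; ring
      refine ⟨hsum, fun q hq => ?_⟩
      calc |∑ e, q e * (w e - highPass N w t ω e)|
          ≤ ∑ e, |q e * (w e - highPass N w t ω e)| := Finset.abs_sum_le_sum_abs _ _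
        _ ≤ ∑ e, |w e - highPass N w t ω e| := by
            apply Finset.sum_le_sum
            intro e _
            rw [abs_mul]
            have h1 : |q e| ≤ 1 := by
              obtain ⟨h0, h1⟩ := hq e
              rw [abs_of_nonneg h0]; exact h1
            nlinarith [abs_nonneg (w e - highPass N w t ω e), abs_nonneg (q e)]
        _ ≤ 4 * (E.card : ℝ) * L / ε := hsum
    -- set inclusion into union of per-coordinate tails
    have hsub : {ω : Fin N → ℝ | ¬ ((∑ e, |w e - highPass N w t ω e|
            ≤ 4 * (E.card : ℝ) * L / ε) ∧
          ∀ q : Fin N → ℝ, (∀ i, q i ∈ Set.Icc (0:ℝ) 1) →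
            |∑ e, q e * (w e - highPass N w t ω e)| ≤ 4 * (E.card : ℝ) * L / ε)}
        ⊆ ⋃ e ∈ E, {ω : Fin N → ℝ | t < |ω e|} := by
      intro ω hω
      by_contra hc
      simp only [Set.mem_iUnion, Set.mem_setOf_eq, not_exists, not_lt] at hc
      exact hω (key ω fun e he => (hc e he))
    refine le_trans (measure_mono hsub) ?_
    refine le_trans (measure_biUnion_finset_le _ _) ?_
    have hb : (0:ℝ) < 1 / ε := by positivity
    have htail : ∀ e ∈ E, (Measure.pi fun _ : Fin N => laplaceMeasure (1 / ε))
        {ω : Fin N → ℝ | t < |ω e|} ≤ ENNReal.ofReal (δ / (2 * n) * (δ / (2 * n))) := by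
      intro e _
      rw [lapPiEval N (1/ε) t hb e]
      refine (lapTail (1/ε) t hb ht.le).trans (le_of_eq ?_)
      congr 1
      have h1 : -t / (1 / ε) = -(2 * L) := by
        rw [htdef]
        have hεne : ε ≠ 0 := ne_of_gt hε
        field_simp
      rw [h1]
      have h2 : Real.exp (-(2 * L)) = Real.exp (-L) * Real.exp (-L) := by
        rw [← Real.exp_add]; ring_nf
      rw [h2, Real.exp_neg, Real.exp_log hpos, inv_div]
    refine le_trans (Finset.sum_le_sum htail) ?_
    rw [Finset.sum_const, nsmul_eq_mul, ← ENNReal.ofReal_natCast,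
      ← ENNReal.ofReal_mul (by positivity)]
    apply ENNReal.ofReal_le_ofReal
    -- (E.card) * (δ/(2n))^2 ≤ δ
    have hcard : (E.card : ℝ) ≤ (n:ℝ)^2 := by
      have h1 : E.card ≤ N := by
        rw [hEdef]
        exact (Finset.card_filter_le _ _).trans (by simp)
      have h2 : N ≤ n^2 := by
        rw [hN, Nat.choose_two_right]
        calc n * (n-1) / 2 ≤ n * (n-1) := Nat.div_le_self _ _
          _ ≤ n * n := Nat.mul_le_mul_left n (Nat.sub_le n 1)
          _ = n^2 := (sq n).symm
      exact_mod_cast h1.trans h2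
    have hx : (0:ℝ) < (n:ℝ) := by linarith
    have heq : δ / (2 * n) * (δ / (2 * n)) = δ^2 / (4 * (n:ℝ)^2) := by
      field_simp; ring
    rw [heq]
    have h3 : (E.card : ℝ) * (δ^2 / (4 * (n:ℝ)^2)) ≤ (n:ℝ)^2 * (δ^2 / (4 * (n:ℝ)^2)) :=
      mul_le_mul_of_nonneg_right hcard (by positivity)
    have h4 : (n:ℝ)^2 * (δ^2 / (4 * (n:ℝ)^2)) = δ^2 / 4 := by field_simp
    nlinarith
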